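/- Let (Ω, (H_t)_{t≥0}, H, (Ê_t)_{t≥0}) be a consistent sublinear expectation space (pointwise version) satisfying Property (P). Let M = (M_t)_{t≥0} be a symmetric martingale with M_0 = 0, and assume all products of finitely many of the M_t belong to H. Let G : ℝ → ℝ, and suppose that for each a ∈ ℝ the process (½ a M_t² − G(a) t)_{t≥0} is a martingale, i.e., Ê_s[½ a M_t² − G(a) t] = ½ a M_s² − G(a) s pointwise for all 0 ≤ s ≤ t. Then for all 0 ≤ s ≤ t and all a ∈ ℝ: Ê_s[a (M_t − M_s)²] = 2 G(a) (t − s) pointwise on Ω. -/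

import Mathlib

/-- A consistent sublinear expectation space (pointwise version):
`Ht t` is the space of random variables known at time `t ≥ 0`,
`H = ⋃_{t ≥ 0} Ht t`, and `E t` is the sublinear conditional expectation at time `t`. -/
structure ConsistentSublinearExpectationSpace (Ω : Type*) where
  Ht : ℝ → Set (Ω → ℝ)
  H : Set (Ω → ℝ)
  H_eq : H = ⋃ t ∈ Set.Ici (0:ℝ), Ht t
  Ht_mono : ∀ ⦃s t : ℝ⦄, 0 ≤ s → s ≤ t → Ht s ⊆ Ht t
  Ht_zero : Ht 0 = {f | ∃ c : ℝ, f = fun _ => c}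
  const_mem : ∀ (t : ℝ), 0 ≤ t → ∀ c : ℝ, (fun _ => c) ∈ Ht t
  add_mem : ∀ (t : ℝ) (X Y : Ω → ℝ), X ∈ Ht t → Y ∈ Ht t →
    (fun ω => X ω + Y ω) ∈ Ht t
  smul_mem : ∀ (t : ℝ) (c : ℝ) (X : Ω → ℝ), X ∈ Ht t → (fun ω => c * X ω) ∈ Ht t
  abs_mem : ∀ (t : ℝ) (X : Ω → ℝ), X ∈ Ht t → (fun ω => |X ω|) ∈ Ht t
  mul_mem : ∀ (t : ℝ) (X Y : Ω → ℝ), X ∈ Ht t → Y ∈ Ht t →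
    (∃ b, ∀ ω, |X ω| ≤ b) → (∃ b, ∀ ω, |Y ω| ≤ b) → (fun ω => X ω * Y ω) ∈ Ht t
  comp_mem : ∀ (t : ℝ), 0 ≤ t → ∀ (n : ℕ) (X : Fin n → Ω → ℝ) (φ : (Fin n → ℝ) → ℝ),
    (∀ i, X i ∈ Ht t) → (∃ b, ∀ x, |φ x| ≤ b) →
    (∃ K, ∀ x y, |φ x - φ y| ≤ K * dist x y) →
    (fun ω => φ (fun i => X i ω)) ∈ Ht t
  E : ℝ → (Ω → ℝ) → Ω → ℝ
  E_mem : ∀ (t : ℝ), 0 ≤ t → ∀ X ∈ H, E t X ∈ Ht t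
  E_mono : ∀ (t : ℝ), 0 ≤ t → ∀ X ∈ H, ∀ Y ∈ H, (∀ ω, Y ω ≤ X ω) →
    ∀ ω, E t Y ω ≤ E t X ω
  E_const : ∀ (t : ℝ), 0 ≤ t → ∀ η ∈ Ht t, E t η = η
  E_subadd : ∀ (t : ℝ), 0 ≤ t → ∀ X ∈ H, ∀ Y ∈ H,
    ∀ ω, E t (fun ω' => X ω' + Y ω') ω ≤ E t X ω + E t Y ω
  E_poshom : ∀ (t : ℝ), 0 ≤ t → ∀ η ∈ Ht t, ∀ X ∈ H,
    (fun ω => η ω * X ω) ∈ H → (∀ ω, 0 ≤ η ω) → (∃ b, ∀ ω, |η ω| ≤ b) →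
    ∀ ω, E t (fun ω' => η ω' * X ω') ω = η ω * E t X ω
  E_consistent : ∀ (s t : ℝ), 0 ≤ s → s ≤ t → ∀ X ∈ H,
    ∀ ω, E s (E t X) ω = E s X ω



namespace ConsistentSublinearExpectationSpace

variable {Ω : Type*} (S : ConsistentSublinearExpectationSpace Ω)

lemma memH {t : ℝ} {X : Ω → ℝ} (ht : 0 ≤ t) (hX : X ∈ S.Ht t) : X ∈ S.H := by
  rw [S.H_eq]
  exact Set.mem_biUnion ht hX

lemma H_smul {X : Ω → ℝ} (c : ℝ) (hX : X ∈ S.H) : (fun ω => c * X ω) ∈ S.H := by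
  rw [S.H_eq] at hX ⊢
  obtain ⟨u, hu, hXu⟩ := Set.mem_iUnion₂.mp hX
  exact Set.mem_biUnion hu (S.smul_mem u c X hXu)

lemma H_add {X Y : Ω → ℝ} (hX : X ∈ S.H) (hY : Y ∈ S.H) :
    (fun ω => X ω + Y ω) ∈ S.H := by
  rw [S.H_eq] at hX hY ⊢
  obtain ⟨u, hu, hXu⟩ := Set.mem_iUnion₂.mp hX
  obtain ⟨v, hv, hYv⟩ := Set.mem_iUnion₂.mp hY
  have hmem : max u v ∈ Set.Ici (0:ℝ) := Set.mem_Ici.mpr (le_max_of_le_left (Set.mem_Ici.mp hu))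
  exact Set.mem_biUnion hmem (S.add_mem (max u v) X Y
    (S.Ht_mono hu (le_max_left u v) hXu) (S.Ht_mono hv (le_max_right u v) hYv))

end ConsistentSublinearExpectationSpace

/-- If `M` is a symmetric martingale with `M_0 = 0` (all finite products of the `M_t`
lying in `H`) and for every `a ∈ ℝ` the process `½ a M_t² − G(a) t` is a martingale,
then `Ê_s[a (M_t − M_s)²] = 2 G(a) (t − s)` for all `0 ≤ s ≤ t`. -/
theorem conditional_increment_variance {Ω : Type*}
    (S : ConsistentSublinearExpectationSpace Ω)
    -- Property (P)
    (hP : ∀ t : ℝ, 0 ≤ t → ∀ η ∈ S.Ht t, ∀ X ∈ S.H, ∀ Y ∈ S.H,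
      (fun ω => η ω * Y ω) ∈ S.H →
      (∀ ω, S.E t Y ω = - S.E t (fun ω' => - Y ω') ω) →
      ∀ ω, S.E t (fun ω' => X ω' + η ω' * Y ω') ω = S.E t X ω + η ω * S.E t Y ω)
    -- the symmetric martingale M
    (M : ℝ → Ω → ℝ) (hMadapted : ∀ t : ℝ, 0 ≤ t → M t ∈ S.Ht t)
    (hM0 : ∀ ω, M 0 ω = 0)
    (hMmart : ∀ s t : ℝ, 0 ≤ s → s ≤ t →
      (∀ ω, S.E s (M t) ω = M s ω) ∧ (∀ ω, S.E s (fun ω' => - M t ω') ω = - M s ω))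
    -- all products of finitely many of the M_t belong to H
    (hprod : ∀ (n : ℕ) (ts : Fin n → ℝ), (∀ i, 0 ≤ ts i) →
      (fun ω => ∏ i : Fin n, M (ts i) ω) ∈ S.H)
    (G : ℝ → ℝ)
    (hGmart : ∀ a s t : ℝ, 0 ≤ s → s ≤ t →
      ∀ ω, S.E s (fun ω' => (1 / 2) * a * (M t ω') ^ 2 - G a * t) ω =
        (1 / 2) * a * (M s ω) ^ 2 - G a * s) :
    ∀ s t : ℝ, 0 ≤ s → s ≤ t → ∀ a : ℝ,
      ∀ ω, S.E s (fun ω' => a * (M t ω' - M s ω') ^ 2) ω = 2 * G a * (t - s) := by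
  intro s t hs hst a ω
  have ht : 0 ≤ t := le_trans hs hst
  have hMs_Ht : M s ∈ S.Ht s := hMadapted s hs
  have hMs_H : M s ∈ S.H := S.memH hs hMs_Ht
  have hMt_H : M t ∈ S.H := S.memH ht (hMadapted t ht)
  have hMtMt : (fun ω => M t ω * M t ω) ∈ S.H := by
    have h := hprod 2 ![t, t] (by intro i; fin_cases i <;> simpa)
    have heq : (fun ω => ∏ i : Fin 2, M (![t, t] i) ω) = fun ω => M t ω * M t ω := by
      funext ω'; simp [Fin.prod_univ_two]
    rwa [heq] at h
  have hMsMt : (fun ω => M s ω * M t ω) ∈ S.H := by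
    have h := hprod 2 ![s, t] (by intro i; fin_cases i <;> simpa)
    have heq : (fun ω => ∏ i : Fin 2, M (![s, t] i) ω) = fun ω => M s ω * M t ω := by
      funext ω'; simp [Fin.prod_univ_two]
    rwa [heq] at h
  have hMsMs : (fun ω => M s ω * M s ω) ∈ S.H := by
    have h := hprod 2 ![s, s] (by intro i; fin_cases i <;> simpa)
    have heq : (fun ω => ∏ i : Fin 2, M (![s, s] i) ω) = fun ω => M s ω * M s ω := by
      funext ω'; simp [Fin.prod_univ_two]
    rwa [heq] at h
  have hX0 : (fun ω' => a * M t ω' ^ 2) ∈ S.H := by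
    have h := S.H_smul a hMtMt
    have heq : (fun ω => a * (M t ω * M t ω)) = fun ω' => a * M t ω' ^ 2 := by
      funext ω'; ring
    rwa [heq] at h
  -- symmetry facts
  have hone_H : (fun _ : Ω => (1 : ℝ)) ∈ S.H := S.memH hs (S.const_mem s hs 1)
  have hE1 : S.E s (fun _ : Ω => (1 : ℝ)) ω = 1 :=
    congrFun (S.E_const s hs _ (S.const_mem s hs 1)) ω
  have hone_sym : ∀ ω, S.E s (fun _ : Ω => (1 : ℝ)) ω
      = - S.E s (fun _ : Ω => -(1 : ℝ)) ω := by
    intro ω'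
    rw [congrFun (S.E_const s hs _ (S.const_mem s hs 1)) ω',
      congrFun (S.E_const s hs _ (S.const_mem s hs (-1))) ω']
    norm_num
  have hMt_sym : ∀ ω, S.E s (M t) ω = - S.E s (fun ω' => - M t ω') ω := by
    intro ω'
    rw [(hMmart s t hs hst).1 ω', (hMmart s t hs hst).2 ω']
    ring
  have hMsneg_Ht : (fun ω' => - M s ω') ∈ S.Ht s := by
    have h := S.smul_mem s (-1) (M s) hMs_Ht
    have heq : (fun ω => (-1 : ℝ) * M s ω) = fun ω' => - M s ω' := by funext ω'; ring
    rwa [heq] at h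
  have hEMs : S.E s (M s) ω = M s ω := congrFun (S.E_const s hs (M s) hMs_Ht) ω
  have hMs_sym : ∀ ω, S.E s (M s) ω = - S.E s (fun ω' => - M s ω') ω := by
    intro ω'
    rw [congrFun (S.E_const s hs (M s) hMs_Ht) ω',
      congrFun (S.E_const s hs _ hMsneg_Ht) ω']
    ring
  -- Step 1: compute E_s[a M_t^2] from the G-martingale property
  have hhalf : S.E s (fun ω' => (1 / 2 : ℝ) * (a * M t ω' ^ 2)) ω
      = (1 / 2 : ℝ) * S.E s (fun ω' => a * M t ω' ^ 2) ω := by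
    refine S.E_poshom s hs (fun _ => (1 / 2 : ℝ)) (S.const_mem s hs _) _ hX0
      (S.H_smul (1 / 2) hX0) (fun _ => by norm_num) ⟨1/2, fun _ => le_of_eq (abs_of_nonneg (by norm_num))⟩ ω
  have step1 : S.E s (fun ω' => (1 / 2 : ℝ) * (a * M t ω' ^ 2)
        + (-(G a * t)) * 1) ω
      = S.E s (fun ω' => (1 / 2 : ℝ) * (a * M t ω' ^ 2)) ω
        + (-(G a * t)) * S.E s (fun _ : Ω => (1 : ℝ)) ω :=
    hP s hs (fun _ => -(G a * t)) (S.const_mem s hs _)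
      (fun ω' => (1 / 2 : ℝ) * (a * M t ω' ^ 2)) (S.H_smul (1 / 2) hX0)
      (fun _ => (1 : ℝ)) hone_H
      (S.memH hs (S.const_mem s hs (-(G a * t) * 1))) hone_sym ω
  have hfun1 : (fun ω' => (1 / 2 : ℝ) * (a * M t ω' ^ 2) + (-(G a * t)) * 1)
      = fun ω' => (1 / 2 : ℝ) * a * (M t ω') ^ 2 - G a * t := by
    funext ω'; ring
  rw [hfun1, hGmart a s t hs hst ω, hE1] at step1
  have hEX0 : S.E s (fun ω' => a * M t ω' ^ 2) ω
      = a * (M s ω) ^ 2 + 2 * G a * (t - s) := by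
    rw [hhalf] at step1
    linarith
  -- Step 2: peel off the cross term
  have stepB : S.E s (fun ω' => a * M t ω' ^ 2 + ((-2 * a) * M s ω') * M t ω') ω
      = S.E s (fun ω' => a * M t ω' ^ 2) ω + ((-2 * a) * M s ω) * S.E s (M t) ω := by
    refine hP s hs (fun ω' => (-2 * a) * M s ω') (S.smul_mem s (-2 * a) (M s) hMs_Ht)
      _ hX0 (M t) hMt_H ?_ hMt_sym ω
    have h := S.H_smul (-2 * a) hMsMt
    have heq : (fun ω => (-2 * a) * (M s ω * M t ω))
        = fun ω => ((-2 * a) * M s ω) * M t ω := by funext ω'; ring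
    rwa [heq] at h
  have hXB : (fun ω' => a * M t ω' ^ 2 + ((-2 * a) * M s ω') * M t ω') ∈ S.H := by
    refine S.H_add hX0 ?_
    have h := S.H_smul (-2 * a) hMsMt
    have heq : (fun ω => (-2 * a) * (M s ω * M t ω))
        = fun ω => ((-2 * a) * M s ω) * M t ω := by funext ω'; ring
    rwa [heq] at h
  -- Step 3: peel off the a M_s^2 term
  have stepC : S.E s (fun ω' => (a * M t ω' ^ 2 + ((-2 * a) * M s ω') * M t ω')
        + (a * M s ω') * M s ω') ω
      = S.E s (fun ω' => a * M t ω' ^ 2 + ((-2 * a) * M s ω') * M t ω') ω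
        + (a * M s ω) * S.E s (M s) ω := by
    refine hP s hs (fun ω' => a * M s ω') (S.smul_mem s a (M s) hMs_Ht)
      _ hXB (M s) hMs_H ?_ hMs_sym ω
    have h := S.H_smul a hMsMs
    have heq : (fun ω => a * (M s ω * M s ω)) = fun ω => (a * M s ω) * M s ω := by
      funext ω'; ring
    rwa [heq] at h
  have hfun : (fun ω' => a * (M t ω' - M s ω') ^ 2)
      = fun ω' => (a * M t ω' ^ 2 + ((-2 * a) * M s ω') * M t ω')
        + (a * M s ω') * M s ω' := by
    funext ω'; ring
  rw [hfun, stepC, stepB, hEX0, (hMmart s t hs hst).1 ω, hEMs]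
  ring
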